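/- Let G be a finite group containing an element whose order equals the exponent of G. Then the order superpower graph S(G) is minimally edge connected if and only if G is a p-group for some prime p. -/

import Mathlib

/-- The degree of a vertex: the number of its neighbours. -/
noncomputable def gDeg {V : Type*} (G : SimpleGraph V) (v : V) : ℕ :=
  (G.neighborSet v).ncard

/-- The minimum degree of a graph. -/
noncomputable def minDeg {V : Type*} (G : SimpleGraph V) : ℕ :=
  sInf (Set.range (gDeg G))

/-- The edge connectivity: the minimum size of a set of edges whose removal
disconnects the graph. -/
noncomputable def edgeConn {V : Type*} (G : SimpleGraph V) : ℕ :=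
  sInf {n : ℕ | ∃ S : Set (Sym2 V), S ⊆ G.edgeSet ∧ S.ncard = n ∧
    ¬ (G.deleteEdges S).Connected}

/-- The vertex connectivity: the minimum size of a set of vertices whose removal
disconnects the graph or leaves a single vertex. -/
noncomputable def vertexConn {V : Type*} (G : SimpleGraph V) : ℕ :=
  sInf {n : ℕ | ∃ S : Set V, S.ncard = n ∧ Sᶜ.Nonempty ∧
    (¬ (G.induce Sᶜ).Preconnected ∨ Sᶜ.ncard = 1)}

/-- A graph is minimally edge connected if deleting any edge decreases the
edge connectivity by one. -/
def MinEdgeConnected {V : Type*} (G : SimpleGraph V) : Prop :=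
  ∀ e ∈ G.edgeSet, edgeConn (G.deleteEdges {e}) = edgeConn G - 1

/-- A graph is minimally connected if deleting any edge decreases the
vertex connectivity by one. -/
def MinConnected {V : Type*} (G : SimpleGraph V) : Prop :=
  ∀ e ∈ G.edgeSet, vertexConn (G.deleteEdges {e}) = vertexConn G - 1

/-- The power graph of a group: distinct `x, y` are adjacent iff one is a
natural power of the other. -/
def powerGraph (G : Type*) [Group G] : SimpleGraph G :=
  SimpleGraph.fromRel (fun x y => ∃ m : ℕ, y = x ^ m)

/-- The enhanced power graph of a group: distinct `x, y` are adjacent iff they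
lie in a common cyclic subgroup. -/
def enhancedPowerGraph (G : Type*) [Group G] : SimpleGraph G :=
  SimpleGraph.fromRel
    (fun x y => ∃ z : G, x ∈ Subgroup.zpowers z ∧ y ∈ Subgroup.zpowers z)

/-- The order superpower graph of a group: distinct `x, y` are adjacent iff the
order of one divides the order of the other. -/
def superpowerGraph (G : Type*) [Group G] : SimpleGraph G :=
  SimpleGraph.fromRel (fun x y => orderOf x ∣ orderOf y)


section AuxGraph
set_option linter.unusedSectionVars false

open SimpleGraph

variable {V : Type*} [Fintype V]

private lemma not_reachable_isolated (Γ : SimpleGraph V) {v u : V}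
    (h : ∀ w, ¬ Γ.Adj v w) (hne : v ≠ u) : ¬ Γ.Reachable v u := by
  rintro ⟨p⟩
  cases p with
  | nil => exact hne rfl
  | cons h' _ => exact h _ h'

private lemma gDeg_eq_degree' (Γ : SimpleGraph V) [DecidableRel Γ.Adj] (v : V) :
    gDeg Γ v = Γ.degree v := by
  rw [gDeg, SimpleGraph.degree, neighborFinset_def, Set.ncard_eq_toFinset_card']

private lemma gDeg_mem_cut (Γ : SimpleGraph V) (v u : V) (huv : u ≠ v) :
    gDeg Γ v ∈ {n : ℕ | ∃ S : Set (Sym2 V), S ⊆ Γ.edgeSet ∧ S.ncard = n ∧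
      ¬ (Γ.deleteEdges S).Connected} := by
  classical
  refine ⟨Γ.incidenceSet v, Γ.incidenceSet_subset v, ?_, ?_⟩
  · rw [gDeg, ← Nat.card_coe_set_eq, ← Nat.card_coe_set_eq]
    exact Nat.card_congr (Γ.incidenceSetEquivNeighborSet v)
  · intro hc
    have hiso : ∀ w, ¬ (Γ.deleteEdges (Γ.incidenceSet v)).Adj v w := by
      intro w hw
      rw [SimpleGraph.deleteEdges_adj] at hw
      exact hw.2 ((Γ.mem_incidenceSet v w).mpr hw.1)
    exact not_reachable_isolated _ hiso huv.symm (hc.preconnected v u)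

private lemma edgeConn_le_gDeg (Γ : SimpleGraph V) (v u : V) (huv : u ≠ v) :
    edgeConn Γ ≤ gDeg Γ v :=
  Nat.sInf_le (gDeg_mem_cut Γ v u huv)

private lemma edgeConn_eq_zero_of_not_connected (Γ : SimpleGraph V) (h : ¬ Γ.Connected) :
    edgeConn Γ = 0 :=
  Nat.sInf_eq_zero.mpr (Or.inl ⟨∅, Set.empty_subset _, Set.ncard_empty _,
    by rwa [SimpleGraph.deleteEdges_empty]⟩)

private lemma minDeg_eq_of (Γ : SimpleGraph V) (d : ℕ) (v : V) (h1 : gDeg Γ v = d)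
    (h2 : ∀ w, d ≤ gDeg Γ w) : minDeg Γ = d := by
  apply le_antisymm
  · exact h1 ▸ Nat.sInf_le ⟨v, rfl⟩
  · refine le_csInf ⟨gDeg Γ v, v, rfl⟩ ?_
    rintro _ ⟨w, rfl⟩
    exact h2 w

private lemma plesnik_count (Γ : SimpleGraph V) [DecidableRel Γ.Adj] [DecidableEq V]
    (A : Finset V) (S : Finset (Sym2 V)) (hA : A.Nonempty)
    (h1 : ∀ a ∈ A, ∃ b, b ∉ A ∧ Γ.Adj a b)
    (h2 : ∀ a b, a ∈ A → b ∉ A → Γ.Adj a b → s(a,b) ∈ S) :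
    ∃ a, Γ.degree a ≤ S.card := by
  set f : V → ℕ := fun a => ((Γ.neighborFinset a) \ A).card with hf
  have hsum : (∑ a ∈ A, f a) ≤ S.card := by
    rw [← Finset.card_sigma]
    apply Finset.card_le_card_of_injOn (fun x => s(x.1, x.2))
    · rintro ⟨a, b⟩ hx
      rw [Finset.mem_coe, Finset.mem_sigma, Finset.mem_sdiff, SimpleGraph.mem_neighborFinset] at hx
      exact h2 a b hx.1 hx.2.2 hx.2.1
    · rintro ⟨a, b⟩ hx ⟨a', b'⟩ hx' heq
      simp only [Finset.coe_sigma, Set.mem_sigma_iff, Finset.mem_coe, Finset.mem_sdiff] at hx hx'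
      rcases Sym2.eq_iff.mp heq with ⟨rfl, rfl⟩ | ⟨rfl, rfl⟩
      · rfl
      · exact absurd hx.1 hx'.2.2
  obtain ⟨a₀, ha₀A, hmin⟩ := Finset.exists_min_image A f hA
  have hcard : A.card * f a₀ ≤ S.card := by
    have := Finset.card_nsmul_le_sum A f (f a₀) (fun x hx => hmin x hx)
    rw [smul_eq_mul] at this
    exact this.trans hsum
  have hf1 : 1 ≤ f a₀ := by
    obtain ⟨b, hbA, hadj⟩ := h1 a₀ ha₀A
    exact Finset.card_pos.mpr ⟨b, Finset.mem_sdiff.mpr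
      ⟨(Γ.mem_neighborFinset a₀ b).mpr hadj, hbA⟩⟩
  refine ⟨a₀, ?_⟩
  have hdeg : Γ.degree a₀ ≤ (A.card - 1) + f a₀ := by
    have hsub : Γ.neighborFinset a₀ ⊆ (A.erase a₀) ∪ (Γ.neighborFinset a₀ \ A) := by
      intro x hx
      by_cases hxA : x ∈ A
      · refine Finset.mem_union_left _ (Finset.mem_erase.mpr ⟨?_, hxA⟩)
        intro h
        exact Γ.irrefl (h ▸ (Γ.mem_neighborFinset a₀ x).mp hx)
      · exact Finset.mem_union_right _ (Finset.mem_sdiff.mpr ⟨hx, hxA⟩)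
    calc Γ.degree a₀ ≤ ((A.erase a₀) ∪ (Γ.neighborFinset a₀ \ A)).card :=
          Finset.card_le_card hsub
      _ ≤ (A.erase a₀).card + f a₀ := Finset.card_union_le _ _
      _ = (A.card - 1) + f a₀ := by rw [Finset.card_erase_of_mem ha₀A]
  have hAc : 1 ≤ A.card := Finset.card_pos.mpr hA
  have key : (A.card - 1) + f a₀ ≤ A.card * f a₀ := by
    obtain ⟨x, hx⟩ := Nat.exists_eq_add_of_le hAc
    obtain ⟨m, hm⟩ := Nat.exists_eq_add_of_le hf1
    rw [hx, hm, Nat.add_sub_cancel_left]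
    nlinarith
  exact hdeg.trans (key.trans hcard)

private lemma exists_gDeg_le_of_cut (Γ : SimpleGraph V) [Nonempty V]
    (hdiam : ∀ u v : V, u ≠ v → ¬ Γ.Adj u v → ∃ w, Γ.Adj u w ∧ Γ.Adj w v)
    (S : Set (Sym2 V)) (hd : ¬ (Γ.deleteEdges S).Connected) :
    ∃ a : V, gDeg Γ a ≤ S.ncard := by
  classical
  set Γ' := Γ.deleteEdges S with hΓ'
  have hpre : ¬ Γ'.Preconnected := fun h => hd ⟨h⟩
  rw [SimpleGraph.Preconnected] at hpre
  push_neg at hpre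
  obtain ⟨u, v, huv⟩ := hpre
  set A : Finset V := Finset.univ.filter (fun x => Γ'.Reachable u x) with hAdef
  have huA : u ∈ A := by
    simp only [hAdef, Finset.mem_filter, Finset.mem_univ, true_and]
    exact SimpleGraph.Reachable.refl u
  have hvA : v ∉ A := by simp [hAdef, huv]
  have hScard : S.toFinset.card = S.ncard := (Set.ncard_eq_toFinset_card' S).symm
  have hcross : ∀ a b : V, a ∈ A → b ∉ A → Γ.Adj a b → s(a,b) ∈ S.toFinset := by
    intro a b haA hbA hadj
    rw [Set.mem_toFinset]
    by_contra hnot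
    have hadj' : Γ'.Adj a b := SimpleGraph.deleteEdges_adj.mpr ⟨hadj, hnot⟩
    have hra : Γ'.Reachable u a := by
      simpa [hAdef] using haA
    apply hbA
    simp only [hAdef, Finset.mem_filter, Finset.mem_univ, true_and]
    exact hra.trans hadj'.reachable
  by_cases hc1 : ∀ a ∈ A, ∃ b, b ∉ A ∧ Γ.Adj a b
  · obtain ⟨a, ha⟩ := plesnik_count Γ A S.toFinset ⟨u, huA⟩ hc1 hcross
    exact ⟨a, by rw [gDeg_eq_degree', ← hScard]; exact ha⟩
  · push_neg at hc1
    obtain ⟨a, haA, hano⟩ := hc1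
    by_cases hc2 : ∀ b ∈ Aᶜ, ∃ c, c ∉ Aᶜ ∧ Γ.Adj b c
    · have hcross2 : ∀ b c, b ∈ Aᶜ → c ∉ Aᶜ → Γ.Adj b c → s(b,c) ∈ S.toFinset := by
        intro b c hb hc hadj
        rw [Sym2.eq_swap]
        exact hcross c b (by simpa using hc) (by simpa using hb) hadj.symm
      obtain ⟨b, hb⟩ := plesnik_count Γ Aᶜ S.toFinset ⟨v, Finset.mem_compl.mpr hvA⟩ hc2 hcross2
      exact ⟨b, by rw [gDeg_eq_degree', ← hScard]; exact hb⟩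
    · push_neg at hc2
      obtain ⟨b, hbA, hbno⟩ := hc2
      exfalso
      have hbA' : b ∉ A := Finset.mem_compl.mp hbA
      have hab : a ≠ b := fun h => hbA' (h ▸ haA)
      obtain ⟨w, hw1, hw2⟩ := hdiam a b hab (hano b hbA')
      by_cases hwA : w ∈ A
      · exact hbno w (fun hx => (Finset.mem_compl.mp hx) hwA) hw2.symm
      · exact hano w hwA hw1

private lemma edgeConn_eq_minDeg (Γ : SimpleGraph V) (u₀ v₀ : V) (huv : u₀ ≠ v₀)
    (hdiam : ∀ u v : V, u ≠ v → ¬ Γ.Adj u v → ∃ w, Γ.Adj u w ∧ Γ.Adj w v) :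
    edgeConn Γ = minDeg Γ := by
  classical
  have hne : Nonempty V := ⟨u₀⟩
  have hle : ∀ v : V, edgeConn Γ ≤ gDeg Γ v := by
    intro v
    rcases eq_or_ne u₀ v with rfl | h
    · exact edgeConn_le_gDeg Γ u₀ v₀ (Ne.symm huv)
    · exact edgeConn_le_gDeg Γ v u₀ h
  apply le_antisymm
  · obtain ⟨v, hv⟩ := Nat.sInf_mem (Set.range_nonempty (gDeg Γ))
    rw [minDeg, ← hv]
    exact hle v
  · have hTne : {n : ℕ | ∃ S : Set (Sym2 V), S ⊆ Γ.edgeSet ∧ S.ncard = n ∧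
        ¬ (Γ.deleteEdges S).Connected}.Nonempty :=
      ⟨gDeg Γ u₀, gDeg_mem_cut Γ u₀ v₀ huv.symm⟩
    obtain ⟨S, _, hScard, hSdis⟩ := Nat.sInf_mem hTne
    obtain ⟨a, ha⟩ := exists_gDeg_le_of_cut Γ hdiam S hSdis
    calc minDeg Γ ≤ gDeg Γ a := Nat.sInf_le ⟨a, rfl⟩
      _ ≤ S.ncard := ha
      _ = edgeConn Γ := hScard

private lemma ncard_compl_singleton (v : V) :
    ({v}ᶜ : Set V).ncard = Fintype.card V - 1 := by
  have h := Set.ncard_add_ncard_compl ({v} : Set V)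
  rw [Set.ncard_singleton, Nat.card_eq_fintype_card] at h
  omega

private lemma ncard_compl_pair {a b : V} (hab : a ≠ b) :
    ({a, b}ᶜ : Set V).ncard = Fintype.card V - 2 := by
  have h := Set.ncard_add_ncard_compl ({a, b} : Set V)
  rw [Set.ncard_pair hab, Nat.card_eq_fintype_card] at h
  omega

end AuxGraph
section TopGraph

open SimpleGraph

set_option linter.unusedSectionVars false

variable {V : Type*} [Fintype V]

private lemma minEdgeConnected_top : MinEdgeConnected (⊤ : SimpleGraph V) := by
  classical
  intro ε hε
  induction ε with
  | _ a b =>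
  rw [SimpleGraph.mem_edgeSet, SimpleGraph.top_adj] at hε
  have hab : a ≠ b := hε
  have hc2 : 1 < Fintype.card V := Fintype.one_lt_card_iff.mpr ⟨a, b, hab⟩
  have hdiamT : ∀ u v : V, u ≠ v → ¬ (⊤ : SimpleGraph V).Adj u v →
      ∃ w, (⊤ : SimpleGraph V).Adj u w ∧ (⊤ : SimpleGraph V).Adj w v := by
    intro u v hne hnadj
    simp only [SimpleGraph.top_adj] at hnadj
    exact absurd hne hnadj
  have hdegT : ∀ v : V, gDeg (⊤ : SimpleGraph V) v = Fintype.card V - 1 := by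
    intro v
    have : (⊤ : SimpleGraph V).neighborSet v = {v}ᶜ := by
      ext w
      simp [SimpleGraph.neighborSet, ne_comm]
    rw [gDeg, this, ncard_compl_singleton]
  have hconnT : edgeConn (⊤ : SimpleGraph V) = Fintype.card V - 1 := by
    rw [edgeConn_eq_minDeg (⊤ : SimpleGraph V) a b hab hdiamT,
      minDeg_eq_of (⊤ : SimpleGraph V) (Fintype.card V - 1) a (hdegT a)
        (fun w => (hdegT w).ge)]
  set Γ' := (⊤ : SimpleGraph V).deleteEdges {s(a,b)} with hΓ'
  have hadj' : ∀ u v : V, Γ'.Adj u v ↔ u ≠ v ∧ s(u,v) ≠ s(a,b) := by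
    intro u v
    rw [hΓ', SimpleGraph.deleteEdges_adj, SimpleGraph.top_adj]
    simp
  rw [hconnT]
  by_cases h3 : 3 ≤ Fintype.card V
  · have hpairne : (({a, b}ᶜ : Set V)).Nonempty := by
      rw [← Set.ncard_pos, ncard_compl_pair hab]
      omega
    have hdiam' : ∀ u v : V, u ≠ v → ¬ Γ'.Adj u v →
        ∃ w, Γ'.Adj u w ∧ Γ'.Adj w v := by
      intro u v hne hnadj
      obtain ⟨w, hw⟩ := hpairne
      simp only [Set.mem_compl_iff, Set.mem_insert_iff, Set.mem_singleton_iff, not_or] at hw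
      have hsv : s(u,v) = s(a,b) := by
        by_contra hs
        exact hnadj ((hadj' u v).mpr ⟨hne, hs⟩)
      have hmem : (u = a ∧ v = b) ∨ (u = b ∧ v = a) := Sym2.eq_iff.mp hsv
      refine ⟨w, (hadj' u w).mpr ⟨?_, ?_⟩, (hadj' w v).mpr ⟨?_, ?_⟩⟩
      · intro h
        rcases hmem with ⟨h1, _⟩ | ⟨h1, _⟩
        · exact hw.1 (h ▸ h1)
        · exact hw.2 (h ▸ h1)
      · intro hs
        rcases Sym2.eq_iff.mp hs with ⟨_, h2⟩ | ⟨_, h2⟩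
        · exact hw.2 h2
        · exact hw.1 h2
      · intro h
        rcases hmem with ⟨_, h1⟩ | ⟨_, h1⟩
        · exact hw.2 (h.trans h1)
        · exact hw.1 (h.trans h1)
      · intro hs
        rcases Sym2.eq_iff.mp hs with ⟨h1, _⟩ | ⟨h1, _⟩
        · exact hw.1 h1
        · exact hw.2 h1
    have hdega : gDeg Γ' a = Fintype.card V - 2 := by
      have : Γ'.neighborSet a = {a, b}ᶜ := by
        ext w
        simp only [SimpleGraph.mem_neighborSet, hadj' a w, Set.mem_compl_iff,
          Set.mem_insert_iff, Set.mem_singleton_iff, not_or]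
        constructor
        · rintro ⟨h1, h2⟩
          refine ⟨fun h => h1 h.symm, fun h => h2 ?_⟩
          rw [h]
        · rintro ⟨h1, h2⟩
          refine ⟨fun h => h1 h.symm, fun h => ?_⟩
          rcases Sym2.eq_iff.mp h with ⟨_, rfl⟩ | ⟨rfl, _⟩
          · exact h2 rfl
          · exact hab rfl
      rw [gDeg, this, ncard_compl_pair hab]
    have hdegall : ∀ w : V, Fintype.card V - 2 ≤ gDeg Γ' w := by
      intro w
      by_cases hwab : w = a ∨ w = b
      · have : Γ'.neighborSet w = ({a, b}ᶜ : Set V) := by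
          ext x
          simp only [SimpleGraph.mem_neighborSet, hadj' w x, Set.mem_compl_iff,
            Set.mem_insert_iff, Set.mem_singleton_iff, not_or]
          rcases hwab with rfl | rfl
          · constructor
            · rintro ⟨h1, h2⟩
              refine ⟨fun h => h1 h.symm, fun h => h2 (by rw [h])⟩
            · rintro ⟨h1, h2⟩
              refine ⟨fun h => h1 h.symm, fun h => ?_⟩
              rcases Sym2.eq_iff.mp h with ⟨_, rfl⟩ | ⟨rfl, _⟩
              · exact h2 rfl
              · exact hab rfl
          · constructor
            · rintro ⟨h1, h2⟩
              refine ⟨fun h => h2 ?_, fun h => h1 h.symm⟩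
              rw [h, Sym2.eq_swap]
            · rintro ⟨h1, h2⟩
              refine ⟨fun h => h2 h.symm, fun h => ?_⟩
              rcases Sym2.eq_iff.mp h with ⟨rfl, _⟩ | ⟨_, rfl⟩
              · exact hab rfl
              · exact h1 rfl
        rw [gDeg, this, ncard_compl_pair hab]
      · push_neg at hwab
        have : Γ'.neighborSet w = ({w} : Set V)ᶜ := by
          ext x
          simp only [SimpleGraph.mem_neighborSet, hadj' w x, Set.mem_compl_iff,
            Set.mem_singleton_iff]
          constructor
          · rintro ⟨h1, _⟩ h
            exact h1 h.symm
          · intro h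
            refine ⟨fun h' => h h'.symm, fun h' => ?_⟩
            rcases Sym2.eq_iff.mp h' with ⟨rfl, _⟩ | ⟨rfl, _⟩
            · exact hwab.1 rfl
            · exact hwab.2 rfl
        rw [gDeg, this, ncard_compl_singleton]
        omega
    rw [edgeConn_eq_minDeg Γ' a b hab hdiam',
      minDeg_eq_of Γ' (Fintype.card V - 2) a hdega hdegall]
    omega
  · -- card = 2 : deleted graph is disconnected
    have hiso : ∀ w, ¬ Γ'.Adj a w := by
      intro w hw
      rw [hadj' a w] at hw
      have hwor : w = a ∨ w = b := by
        by_contra hcon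
        push_neg at hcon
        exact h3 (Fintype.two_lt_card_iff.mpr ⟨w, a, b, hcon.1, hcon.2, hab⟩)
      rcases hwor with rfl | rfl
      · exact hw.1 rfl
      · exact hw.2 rfl
    have hdis : ¬ Γ'.Connected := by
      intro hc
      exact not_reachable_isolated Γ' hiso hab (hc.preconnected a b)
    rw [edgeConn_eq_zero_of_not_connected Γ' hdis]
    omega

end TopGraph
section GroupAux

open SimpleGraph

set_option linter.unusedSectionVars false

variable {G : Type*} [Group G] [Fintype G]

private lemma superpower_adj (x y : G) :
    (superpowerGraph G).Adj x y ↔ x ≠ y ∧ (orderOf x ∣ orderOf y ∨ orderOf y ∣ orderOf x) :=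
  SimpleGraph.fromRel_adj _ x y

private lemma superpower_eq_top {p n : ℕ} (hp : p.Prime) (hcard : Fintype.card G = p ^ n) :
    superpowerGraph G = (⊤ : SimpleGraph G) := by
  ext x y
  rw [superpower_adj, SimpleGraph.top_adj]
  constructor
  · exact fun h => h.1
  · intro hxy
    refine ⟨hxy, ?_⟩
    obtain ⟨i, hi, hx⟩ := (Nat.dvd_prime_pow hp).mp (hcard ▸ orderOf_dvd_card (x := x))
    obtain ⟨j, hj, hy⟩ := (Nat.dvd_prime_pow hp).mp (hcard ▸ orderOf_dvd_card (x := y))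
    rw [hx, hy]
    rcases le_total i j with h | h
    · exact Or.inl (pow_dvd_pow p h)
    · exact Or.inr (pow_dvd_pow p h)

end GroupAux

/-- For a finite group `G` of full exponent, the order superpower
graph is minimally edge connected iff `G` is a `p`-group for some prime `p`. -/
theorem stmt_8 (G : Type*) [Group G] [Fintype G]
    (hfull : ∃ g : G, orderOf g = Monoid.exponent G) :
    MinEdgeConnected (superpowerGraph G) ↔
      ∃ p n : ℕ, p.Prime ∧ Nat.card G = p ^ n := by
  classical
  obtain ⟨g, hg⟩ := hfull
  constructor
  · -- MinEdgeConnected → prime power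
    intro hmin
    by_contra hnp
    push_neg at hnp
    have hc1 : Fintype.card G ≠ 1 := by
      intro h
      exact hnp 2 0 Nat.prime_two (by rw [Nat.card_eq_fintype_card, h]; rfl)
    have hnpp : ¬ IsPrimePow (Fintype.card G) := by
      rintro ⟨p, k, hp, hk, hpk⟩
      exact hnp p k (Nat.prime_iff.mpr hp)
        (by rw [Nat.card_eq_fintype_card]; exact hpk.symm)
    rw [isPrimePow_iff_unique_prime_dvd] at hnpp
    have hpprime : (Fintype.card G).minFac.Prime := Nat.minFac_prime hc1
    set p := (Fintype.card G).minFac with hpdef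
    have hpdvd : p ∣ Fintype.card G := Nat.minFac_dvd _
    rw [ExistsUnique] at hnpp
    push_neg at hnpp
    obtain ⟨q, ⟨hqprime, hqdvd⟩, hqne⟩ := hnpp p ⟨hpprime, hpdvd⟩
    haveI : Fact p.Prime := ⟨hpprime⟩
    haveI : Fact q.Prime := ⟨hqprime⟩
    obtain ⟨a, ha⟩ := exists_prime_orderOf_dvd_card p hpdvd
    obtain ⟨b, hb⟩ := exists_prime_orderOf_dvd_card q hqdvd
    have hpq : p ≠ q := fun h => hqne h.symm
    have hpe : p ∣ Monoid.exponent G := ha ▸ Monoid.order_dvd_exponent a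
    have hqe : q ∣ Monoid.exponent G := hb ▸ Monoid.order_dvd_exponent b
    set Γ := superpowerGraph G with hΓdef
    set c := Fintype.card G with hcdef
    have h1g : (1 : G) ≠ g := by
      intro h
      have h1 : orderOf g = 1 := by rw [← h, orderOf_one]
      rw [hg] at h1
      rw [h1] at hpe
      exact hpprime.one_lt.ne' (Nat.dvd_one.mp hpe)
    have hAdj1 : ∀ x : G, x ≠ 1 → Γ.Adj 1 x := by
      intro x hx
      exact (superpower_adj 1 x).mpr ⟨hx.symm, Or.inl (by rw [orderOf_one]; exact one_dvd _)⟩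
    have hAdjg : ∀ x : G, x ≠ g → Γ.Adj g x := by
      intro x hx
      exact (superpower_adj g x).mpr ⟨hx.symm, Or.inr (hg ▸ Monoid.order_dvd_exponent x)⟩
    have ha1 : a ≠ 1 := by
      intro h
      rw [h, orderOf_one] at ha
      exact hpprime.one_lt.ne' ha.symm
    have hab : a ≠ b := by
      intro h
      rw [h, hb] at ha
      exact hpq ha.symm
    have hag : a ≠ g := by
      intro h
      rw [h, hg] at ha
      rw [ha] at hqe
      exact hpq ((Nat.prime_dvd_prime_iff_eq hqprime hpprime).mp hqe).symm
    have hnadjab : ¬ Γ.Adj a b := by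
      intro h
      rcases ((superpower_adj a b).mp h).2 with hd | hd
      · rw [ha, hb] at hd
        exact hpq ((Nat.prime_dvd_prime_iff_eq hpprime hqprime).mp hd)
      · rw [ha, hb] at hd
        exact hpq ((Nat.prime_dvd_prime_iff_eq hqprime hpprime).mp hd).symm
    have hc2 : 2 ≤ c := Fintype.one_lt_card_iff.mpr ⟨1, g, h1g⟩
    have hnbrs1 : Γ.neighborSet 1 = ({1} : Set G)ᶜ := by
      ext x
      simp only [SimpleGraph.mem_neighborSet, Set.mem_compl_iff, Set.mem_singleton_iff]
      exact ⟨fun h => h.ne', fun h => hAdj1 x h⟩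
    have hnbrsg : Γ.neighborSet g = ({g} : Set G)ᶜ := by
      ext x
      simp only [SimpleGraph.mem_neighborSet, Set.mem_compl_iff, Set.mem_singleton_iff]
      exact ⟨fun h => h.ne', fun h => hAdjg x h⟩
    have hdeg1 : gDeg Γ 1 = c - 1 := by rw [gDeg, hnbrs1, ncard_compl_singleton]
    have hdegg : gDeg Γ g = c - 1 := by rw [gDeg, hnbrsg, ncard_compl_singleton]
    have hdega : gDeg Γ a ≤ c - 2 := by
      have hsub : Γ.neighborSet a ⊆ ({a, b} : Set G)ᶜ := by
        intro x hx
        simp only [Set.mem_compl_iff, Set.mem_insert_iff, Set.mem_singleton_iff, not_or]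
        rw [SimpleGraph.mem_neighborSet] at hx
        exact ⟨fun h => Γ.irrefl (h ▸ hx), fun h => hnadjab (h ▸ hx)⟩
      calc gDeg Γ a ≤ (({a, b} : Set G)ᶜ).ncard := Set.ncard_le_ncard hsub (Set.toFinite _)
        _ = c - 2 := ncard_compl_pair hab
    have hdegpos : ∀ v : G, 1 ≤ gDeg Γ v := by
      intro v
      rcases eq_or_ne v 1 with rfl | hv
      · rw [gDeg]
        exact (Set.ncard_pos (Set.toFinite _)).mpr ⟨a, (Γ.mem_neighborSet 1 a).mpr (hAdj1 a ha1)⟩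
      · rw [gDeg]
        exact (Set.ncard_pos (Set.toFinite _)).mpr ⟨1, (Γ.mem_neighborSet v 1).mpr (hAdj1 v hv).symm⟩
    obtain ⟨v₀, hv₀⟩ := Nat.sInf_mem (Set.range_nonempty (gDeg Γ))
    have hv₀δ : gDeg Γ v₀ = minDeg Γ := hv₀
    have hδle : minDeg Γ ≤ c - 2 := le_trans (Nat.sInf_le ⟨a, rfl⟩) hdega
    have hδpos : 1 ≤ minDeg Γ := hv₀δ ▸ hdegpos v₀
    have hv₀1 : v₀ ≠ 1 := by
      intro h
      rw [h, hdeg1] at hv₀δ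
      omega
    have hv₀g : v₀ ≠ g := by
      intro h
      rw [h, hdegg] at hv₀δ
      omega
    have hadj1g : Γ.Adj 1 g := hAdj1 g (Ne.symm h1g)
    have hε : s((1:G), g) ∈ Γ.edgeSet := hadj1g
    set Γ' := Γ.deleteEdges {s((1:G), g)} with hΓ''
    have hadj'iff : ∀ u w : G, Γ'.Adj u w ↔ Γ.Adj u w ∧ s(u,w) ≠ s((1:G),g) := by
      intro u w
      rw [hΓ'', SimpleGraph.deleteEdges_adj]
      simp
    have hsame : ∀ v : G, v ≠ 1 → v ≠ g → Γ'.neighborSet v = Γ.neighborSet v := by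
      intro v h1 h2
      ext x
      simp only [SimpleGraph.mem_neighborSet, hadj'iff]
      constructor
      · exact fun h => h.1
      · intro h
        refine ⟨h, fun hs => ?_⟩
        rcases Sym2.eq_iff.mp hs with ⟨h', _⟩ | ⟨h', _⟩
        · exact h1 h'
        · exact h2 h'
    have hdeg'1 : gDeg Γ' 1 = c - 2 := by
      have hns : Γ'.neighborSet 1 = ({1, g} : Set G)ᶜ := by
        ext x
        simp only [SimpleGraph.mem_neighborSet, hadj'iff, Set.mem_compl_iff,
          Set.mem_insert_iff, Set.mem_singleton_iff, not_or]
        constructor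
        · rintro ⟨h1, h2⟩
          exact ⟨h1.ne', fun h => h2 (by rw [h])⟩
        · rintro ⟨h1, h2⟩
          refine ⟨hAdj1 x h1, fun hs => ?_⟩
          rcases Sym2.eq_iff.mp hs with ⟨_, h'⟩ | ⟨h', _⟩
          · exact h2 h'
          · exact h1g h'
      rw [gDeg, hns, ncard_compl_pair h1g]
    have hdeg'g : gDeg Γ' g = c - 2 := by
      have hns : Γ'.neighborSet g = ({g, 1} : Set G)ᶜ := by
        ext x
        simp only [SimpleGraph.mem_neighborSet, hadj'iff, Set.mem_compl_iff,
          Set.mem_insert_iff, Set.mem_singleton_iff, not_or]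
        constructor
        · rintro ⟨h1, h2⟩
          exact ⟨h1.ne', fun h => h2 (by rw [h, Sym2.eq_swap])⟩
        · rintro ⟨h1, h2⟩
          refine ⟨hAdjg x h1, fun hs => ?_⟩
          rcases Sym2.eq_iff.mp hs with ⟨h', _⟩ | ⟨_, h'⟩
          · exact h1g h'.symm
          · exact h2 h'
      rw [gDeg, hns, ncard_compl_pair (Ne.symm h1g)]
    have hdeg'v₀ : gDeg Γ' v₀ = minDeg Γ := by
      rw [gDeg, hsame v₀ hv₀1 hv₀g]
      exact hv₀δ
    have hminDeg' : minDeg Γ' = minDeg Γ := by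
      apply minDeg_eq_of Γ' (minDeg Γ) v₀ hdeg'v₀
      intro w
      rcases eq_or_ne w 1 with rfl | hw1
      · rw [hdeg'1]; omega
      rcases eq_or_ne w g with rfl | hwg
      · rw [hdeg'g]; omega
      · rw [gDeg, hsame w hw1 hwg]
        exact Nat.sInf_le ⟨w, rfl⟩
    have hdiamΓ : ∀ u v : G, u ≠ v → ¬ Γ.Adj u v → ∃ w, Γ.Adj u w ∧ Γ.Adj w v := by
      intro u v hne hnadj
      have hu1 : u ≠ 1 := by
        rintro rfl
        exact hnadj (hAdj1 v hne.symm)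
      have hv1 : v ≠ 1 := by
        rintro rfl
        exact hnadj (hAdj1 u hu1).symm
      exact ⟨1, (hAdj1 u hu1).symm, hAdj1 v hv1⟩
    have hdiamΓ' : ∀ u v : G, u ≠ v → ¬ Γ'.Adj u v → ∃ w, Γ'.Adj u w ∧ Γ'.Adj w v := by
      intro u v hne hnadj
      by_cases hsv : s(u,v) = s((1:G), g)
      · have hadj'1a : Γ'.Adj 1 a := (hadj'iff 1 a).mpr ⟨hAdj1 a ha1, by
          intro hs
          rcases Sym2.eq_iff.mp hs with ⟨_, h'⟩ | ⟨h', _⟩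
          · exact hag h'
          · exact h1g h'⟩
        have hadj'ag : Γ'.Adj a g := (hadj'iff a g).mpr ⟨(hAdjg a hag).symm, by
          intro hs
          rcases Sym2.eq_iff.mp hs with ⟨h', _⟩ | ⟨h', _⟩
          · exact ha1 h'
          · exact hag h'⟩
        rcases Sym2.eq_iff.mp hsv with ⟨h1, h2⟩ | ⟨h1, h2⟩
        · subst h1; subst h2
          exact ⟨a, hadj'1a, hadj'ag⟩
        · subst h1; subst h2
          exact ⟨a, hadj'ag.symm, hadj'1a.symm⟩
      · have hnadjΓ : ¬ Γ.Adj u v := fun h => hnadj ((hadj'iff u v).mpr ⟨h, hsv⟩)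
        have hu1 : u ≠ 1 := by rintro rfl; exact hnadjΓ (hAdj1 v hne.symm)
        have hv1 : v ≠ 1 := by rintro rfl; exact hnadjΓ (hAdj1 u hu1).symm
        have hug : u ≠ g := by rintro rfl; exact hnadjΓ (hAdjg v hne.symm)
        have hvg : v ≠ g := by rintro rfl; exact hnadjΓ (hAdjg u hug).symm
        refine ⟨1, (hadj'iff u 1).mpr ⟨(hAdj1 u hu1).symm, ?_⟩,
          (hadj'iff 1 v).mpr ⟨hAdj1 v hv1, ?_⟩⟩
        · intro hs
          rcases Sym2.eq_iff.mp hs with ⟨h', _⟩ | ⟨h', _⟩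
          · exact hu1 h'
          · exact hug h'
        · intro hs
          rcases Sym2.eq_iff.mp hs with ⟨_, h'⟩ | ⟨h', _⟩
          · exact hvg h'
          · exact h1g h'
    have hconn : edgeConn Γ = minDeg Γ := edgeConn_eq_minDeg Γ 1 g h1g hdiamΓ
    have hconn' : edgeConn Γ' = minDeg Γ := by
      rw [edgeConn_eq_minDeg Γ' 1 g h1g hdiamΓ', hminDeg']
    have hfin := hmin (s((1:G), g)) hε
    rw [← hΓ''] at hfin
    rw [hconn, hconn'] at hfin
    omega
  · rintro ⟨p, n, hp, hcard⟩
    rw [Nat.card_eq_fintype_card] at hcard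
    rw [superpower_eq_top hp hcard]
    exact minEdgeConnected_top
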